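/- For every graph G of order n with maximum degree Δ ≥ 2, γ(G) ≤ (1 + ln(1+Δ)) · γ_f(G); in particular γ(G) ≤ C·ln(n)·γ_f(G) for an absolute constant C. -/

import Mathlib

open Finset

namespace SG

variable {V : Type*}

/-- Closed neighborhood of a vertex as a `Finset`. -/
def closedNbhd [Fintype V] [DecidableEq V] (G : SimpleGraph V) [DecidableRel G.Adj]
    (v : V) : Finset V :=
  insert v (G.neighborFinset v)

/-- A fractional domination: weights in `[0,1]` with each closed neighborhood of weight `≥ 1`. -/
def IsFracDom [Fintype V] [DecidableEq V] (G : SimpleGraph V) [DecidableRel G.Adj]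
    (f : V → ℝ) : Prop :=
  (∀ v, 0 ≤ f v ∧ f v ≤ 1) ∧ ∀ v, 1 ≤ ∑ u ∈ closedNbhd G v, f u

/-- The fractional domination number. -/
noncomputable def fracDomNumber [Fintype V] [DecidableEq V] (G : SimpleGraph V)
    [DecidableRel G.Adj] : ℝ :=
  sInf {x | ∃ f, IsFracDom G f ∧ x = ∑ v, f v}

/-- A dominating set: every vertex not in `S` is adjacent to some vertex of `S`. -/
def IsDomSet (G : SimpleGraph V) (S : Finset V) : Prop :=
  ∀ v, v ∉ S → ∃ u ∈ S, G.Adj u v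

/-- The domination number. -/
noncomputable def domNumber [Fintype V] (G : SimpleGraph V) : ℕ :=
  sInf {k | ∃ S : Finset V, S.card = k ∧ IsDomSet G S}


noncomputable def Harm (n : ℕ) : ℝ := ∑ i ∈ Finset.range n, 1 / (i + 1 : ℝ)

lemma Harm_nonneg (n : ℕ) : 0 ≤ Harm n := by
  unfold Harm; positivity

lemma Harm_mono {a b : ℕ} (h : a ≤ b) : Harm a ≤ Harm b := by
  unfold Harm
  exact Finset.sum_le_sum_of_subset_of_nonneg (Finset.range_subset_range.2 h)
    (fun i _ _ => by positivity)

lemma Harm_one : Harm 1 = 1 := by simp [Harm]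

lemma Harm_diff {a b : ℕ} (hba : b ≤ a) (ha : 0 < a) :
    ((a : ℝ) - b) / a ≤ Harm a - Harm b := by
  have h1 : Harm a - Harm b = ∑ i ∈ Finset.Ico b a, 1 / (i + 1 : ℝ) := by
    rw [Harm, Harm, Finset.sum_Ico_eq_sub _ hba]
  rw [h1]
  have h2 : ∀ i ∈ Finset.Ico b a, 1 / (a : ℝ) ≤ 1 / (i + 1 : ℝ) := by
    intro i hi
    rw [Finset.mem_Ico] at hi
    apply one_div_le_one_div_of_le (by positivity)
    have : i + 1 ≤ a := hi.2
    exact_mod_cast this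
  calc ((a : ℝ) - b) / a = (a - b) * (1 / a) := by ring
    _ = ((Finset.Ico b a).card : ℝ) * (1 / a) := by
        rw [Nat.card_Ico]; push_cast [hba]; ring
    _ = ∑ _i ∈ Finset.Ico b a, 1 / (a : ℝ) := by rw [Finset.sum_const, nsmul_eq_mul]
    _ ≤ ∑ i ∈ Finset.Ico b a, 1 / (i + 1 : ℝ) := Finset.sum_le_sum h2

lemma Harm_le_log {m : ℕ} (hm : 1 ≤ m) : Harm m ≤ 1 + Real.log m := by
  induction m, hm using Nat.le_induction with
  | base => simp [Harm_one]
  | succ m hm ih =>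
    have h0 : (0:ℝ) < m := by exact_mod_cast hm
    have h1 : Harm (m + 1) = Harm m + 1 / (m + 1 : ℝ) := by
      simp [Harm, Finset.sum_range_succ]
    have hlog : Real.log m + 1 / (m + 1 : ℝ) ≤ Real.log (m + 1) := by
      have hx : Real.log ((m : ℝ) / (m + 1)) ≤ (m : ℝ) / (m + 1) - 1 :=
        Real.log_le_sub_one_of_pos (by positivity)
      rw [Real.log_div (by positivity) (by positivity)] at hx
      have : (m : ℝ) / (m + 1) - 1 = - (1 / (m + 1)) := by field_simp; ring
      rw [this] at hx
      linarith
    rw [h1]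
    push_cast
    push_cast at hlog
    linarith [ih]


lemma mem_closedNbhd_self [Fintype V] [DecidableEq V] (G : SimpleGraph V) [DecidableRel G.Adj]
    (v : V) : v ∈ closedNbhd G v := Finset.mem_insert_self _ _

lemma mem_closedNbhd_comm [Fintype V] [DecidableEq V] (G : SimpleGraph V) [DecidableRel G.Adj]
    {u v : V} : v ∈ closedNbhd G u ↔ u ∈ closedNbhd G v := by
  simp only [closedNbhd, Finset.mem_insert, SimpleGraph.mem_neighborFinset]
  constructor
  · rintro (rfl | h); · exact Or.inl rfl
    · exact Or.inr h.symm
  · rintro (rfl | h); · exact Or.inl rfl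
    · exact Or.inr h.symm

lemma exists_cover [Fintype V] [DecidableEq V] (G : SimpleGraph V) [DecidableRel G.Adj]
    (f : V → ℝ) (hf : IsFracDom G f) (U : Finset V) :
    ∃ S : Finset V, (∀ v ∈ U, ∃ u ∈ S, v ∈ closedNbhd G u) ∧
      (S.card : ℝ) ≤ ∑ u, f u * Harm ((closedNbhd G u ∩ U).card) := by
  induction U using Finset.strongInduction with
  | _ U ih =>
    rcases U.eq_empty_or_nonempty with rfl | ⟨v0, hv0⟩
    · refine ⟨∅, by simp, ?_⟩
      simp only [Finset.card_empty, Nat.cast_zero]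
      exact Finset.sum_nonneg fun u _ => mul_nonneg (hf.1 u).1 (Harm_nonneg _)
    · obtain ⟨u0, -, hu0⟩ := Finset.exists_max_image Finset.univ
        (fun u => ((closedNbhd G u ∩ U).card)) ⟨v0, Finset.mem_univ v0⟩
      set M : Finset V := closedNbhd G u0 ∩ U with hM
      have hcpos : 0 < M.card := by
        have h1 : 0 < (closedNbhd G v0 ∩ U).card :=
          Finset.card_pos.2 ⟨v0, Finset.mem_inter.2 ⟨mem_closedNbhd_self G v0, hv0⟩⟩
        exact lt_of_lt_of_le h1 (hu0 v0 (Finset.mem_univ v0))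
      obtain ⟨w, hw⟩ := Finset.card_pos.1 hcpos
      set U' : Finset V := U \ closedNbhd G u0 with hU'
      have hss : U' ⊂ U := by
        refine (Finset.ssubset_iff_of_subset (Finset.sdiff_subset)).2
          ⟨w, (Finset.mem_inter.1 hw).2, ?_⟩
        simp only [hU', Finset.mem_sdiff, not_and, not_not]
        intro _; exact (Finset.mem_inter.1 hw).1
      obtain ⟨S', hS'cov, hS'card⟩ := ih U' hss
      refine ⟨insert u0 S', ?_, ?_⟩
      · intro v hv
        by_cases hvN : v ∈ closedNbhd G u0
        · exact ⟨u0, Finset.mem_insert_self _ _, hvN⟩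
        · obtain ⟨u, hu, huv⟩ := hS'cov v (Finset.mem_sdiff.2 ⟨hv, hvN⟩)
          exact ⟨u, Finset.mem_insert_of_mem hu, huv⟩
      · -- cardinality bound
        have hcard : ((insert u0 S').card : ℝ) ≤ S'.card + 1 := by
          exact_mod_cast Finset.card_insert_le u0 S'
        -- key: 1 + Φ(U') ≤ Φ(U)
        have key : (1 : ℝ) + ∑ u, f u * Harm ((closedNbhd G u ∩ U').card)
            ≤ ∑ u, f u * Harm ((closedNbhd G u ∩ U).card) := by
          have hsplit : ∀ u : V, ((closedNbhd G u ∩ U').card : ℕ)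
              = (closedNbhd G u ∩ U).card - (closedNbhd G u ∩ M).card ∧
              (closedNbhd G u ∩ M).card ≤ (closedNbhd G u ∩ U).card := by
            intro u
            have h1 : closedNbhd G u ∩ U' = (closedNbhd G u ∩ U) \ closedNbhd G u0 := by
              rw [hU', Finset.inter_sdiff_assoc]
            have h2 : (closedNbhd G u ∩ U) ∩ closedNbhd G u0 = closedNbhd G u ∩ M := by
              rw [hM, Finset.inter_assoc, Finset.inter_comm U]
            constructor
            · rw [h1, ← h2]
              have := Finset.card_inter_add_card_sdiff (closedNbhd G u ∩ U) (closedNbhd G u0)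
              omega
            · rw [← h2]
              exact Finset.card_le_card (Finset.inter_subset_left)
          -- per-u bound: d_u / c ≤ Harm c_u − Harm c'_u
          have hper : ∀ u : V, ((closedNbhd G u ∩ M).card : ℝ) / M.card
              ≤ Harm ((closedNbhd G u ∩ U).card) - Harm ((closedNbhd G u ∩ U').card) := by
            intro u
            obtain ⟨he, hle⟩ := hsplit u
            rcases Nat.eq_zero_or_pos ((closedNbhd G u ∩ U).card) with h0 | hpos
            · have hd0 : (closedNbhd G u ∩ M).card = 0 := by omega
              rw [he, hd0, h0]
              simp
            · have h1 : (((closedNbhd G u ∩ U).card : ℝ) - ((closedNbhd G u ∩ U').card))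
                  / ((closedNbhd G u ∩ U).card)
                  ≤ Harm ((closedNbhd G u ∩ U).card) - Harm ((closedNbhd G u ∩ U').card) :=
                Harm_diff (by omega) hpos
              refine le_trans ?_ h1
              have he' : (((closedNbhd G u ∩ U).card : ℝ) - ((closedNbhd G u ∩ U').card))
                  = ((closedNbhd G u ∩ M).card : ℝ) := by
                rw [he]; push_cast [Nat.cast_sub hle]; ring
              rw [he']
              apply div_le_div_of_nonneg_left (by positivity) (by exact_mod_cast hpos)
              exact_mod_cast hu0 u (Finset.mem_univ u)
          -- sum of f u * d_u ≥ c
          have hsum : (M.card : ℝ) ≤ ∑ u, f u * ((closedNbhd G u ∩ M).card) := by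
            have hrw : ∀ u : V, ((closedNbhd G u ∩ M).card : ℝ)
                = ∑ v ∈ M, (if v ∈ closedNbhd G u then (1:ℝ) else 0) := by
              intro u
              rw [Finset.inter_comm, ← Finset.filter_mem_eq_inter, Finset.card_filter]
              push_cast
              simp
            calc (M.card : ℝ) = ∑ v ∈ M, (1:ℝ) := by simp
              _ ≤ ∑ v ∈ M, ∑ u ∈ closedNbhd G v, f u := by
                  apply Finset.sum_le_sum; intro v _; exact hf.2 v
              _ = ∑ v ∈ M, ∑ u, (if v ∈ closedNbhd G u then f u else 0) := by
                  apply Finset.sum_congr rfl; intro v _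
                  rw [← Finset.univ_inter (closedNbhd G v), ← Finset.sum_ite_mem]
                  apply Finset.sum_congr rfl; intro u _
                  exact if_congr (mem_closedNbhd_comm G) rfl rfl
              _ = ∑ u, f u * ((closedNbhd G u ∩ M).card) := by
                  rw [Finset.sum_comm]
                  apply Finset.sum_congr rfl; intro u _
                  rw [hrw u, Finset.mul_sum]
                  apply Finset.sum_congr rfl; intro v _
                  split <;> simp
          have hc : (0:ℝ) < M.card := by exact_mod_cast hcpos
          have h3 : ∑ u, f u * (((closedNbhd G u ∩ M).card : ℝ) / M.card)
              ≤ ∑ u, f u * (Harm ((closedNbhd G u ∩ U).card)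
                - Harm ((closedNbhd G u ∩ U').card)) :=
            Finset.sum_le_sum fun u _ => mul_le_mul_of_nonneg_left (hper u) (hf.1 u).1
          have h4 : (1:ℝ) ≤ ∑ u, f u * (((closedNbhd G u ∩ M).card : ℝ) / M.card) := by
            have heq : ∑ u, f u * (((closedNbhd G u ∩ M).card : ℝ) / M.card)
                = (∑ u, f u * ((closedNbhd G u ∩ M).card : ℝ)) / M.card := by
              rw [Finset.sum_div]; apply Finset.sum_congr rfl; intros; ring
            rw [heq, le_div_iff₀ hc, one_mul]
            exact hsum
          have h5 : ∑ u, f u * (Harm ((closedNbhd G u ∩ U).card)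
                - Harm ((closedNbhd G u ∩ U').card))
              = (∑ u, f u * Harm ((closedNbhd G u ∩ U).card))
                - ∑ u, f u * Harm ((closedNbhd G u ∩ U').card) := by
            rw [← Finset.sum_sub_distrib]
            apply Finset.sum_congr rfl; intros; ring
          linarith
        calc ((insert u0 S').card : ℝ) ≤ S'.card + 1 := hcard
          _ ≤ (∑ u, f u * Harm ((closedNbhd G u ∩ U').card)) + 1 := by linarith
          _ ≤ ∑ u, f u * Harm ((closedNbhd G u ∩ U).card) := by linarith [key]

lemma card_closedNbhd [Fintype V] [DecidableEq V] (G : SimpleGraph V) [DecidableRel G.Adj]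
    (u : V) : (closedNbhd G u).card = G.degree u + 1 := by
  rw [closedNbhd, Finset.card_insert_of_notMem (G.notMem_neighborFinset_self u),
    SimpleGraph.card_neighborFinset_eq_degree]

lemma domNumber_le_harm [Fintype V] [DecidableEq V] (G : SimpleGraph V) [DecidableRel G.Adj]
    (f : V → ℝ) (hf : IsFracDom G f) :
    (domNumber G : ℝ) ≤ Harm (G.maxDegree + 1) * ∑ v, f v := by
  obtain ⟨S, hcov, hcard⟩ := exists_cover G f hf Finset.univ
  have hdom : IsDomSet G S := by
    intro v hv
    obtain ⟨u, hu, hvu⟩ := hcov v (Finset.mem_univ v)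
    rcases Finset.mem_insert.1 hvu with rfl | h
    · exact absurd hu hv
    · exact ⟨u, hu, (G.mem_neighborFinset u v).1 h⟩
  have h1 : domNumber G ≤ S.card := Nat.sInf_le ⟨S, rfl, hdom⟩
  have h2 : (S.card : ℝ) ≤ Harm (G.maxDegree + 1) * ∑ v, f v := by
    refine hcard.trans ?_
    have : ∀ u : V, f u * Harm ((closedNbhd G u ∩ Finset.univ).card)
        ≤ f u * Harm (G.maxDegree + 1) := by
      intro u
      apply mul_le_mul_of_nonneg_left _ (hf.1 u).1
      apply Harm_mono
      rw [Finset.inter_univ, card_closedNbhd]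
      exact Nat.add_le_add_right (G.degree_le_maxDegree u) 1
    calc ∑ u, f u * Harm ((closedNbhd G u ∩ Finset.univ).card)
        ≤ ∑ u, f u * Harm (G.maxDegree + 1) := Finset.sum_le_sum fun u _ => this u
      _ = Harm (G.maxDegree + 1) * ∑ v, f v := by rw [← Finset.sum_mul]; ring
  exact le_trans (by exact_mod_cast h1) h2

lemma fracSet_nonempty [Fintype V] [DecidableEq V] (G : SimpleGraph V) [DecidableRel G.Adj] :
    {x : ℝ | ∃ f, IsFracDom G f ∧ x = ∑ v, f v}.Nonempty := by
  refine ⟨∑ v : V, (1:ℝ), fun _ => 1, ⟨fun v => ⟨zero_le_one, le_refl 1⟩, fun v => ?_⟩, rfl⟩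
  rw [Finset.sum_const, nsmul_eq_mul, mul_one]
  have : 0 < (closedNbhd G v).card := Finset.card_pos.2 ⟨v, Finset.mem_insert_self _ _⟩
  exact_mod_cast this

lemma fracDomNumber_nonneg [Fintype V] [DecidableEq V] (G : SimpleGraph V)
    [DecidableRel G.Adj] : 0 ≤ fracDomNumber G := by
  apply le_csInf (fracSet_nonempty G)
  rintro x ⟨f, hf, rfl⟩
  exact Finset.sum_nonneg fun v _ => (hf.1 v).1


/-- for every graph of order `n` with `Δ ≥ 2`,
`γ(G) ≤ (1 + ln(1+Δ))·γ_f(G)`, and in particular `γ(G) ≤ C·ln(n)·γ_f(G)` for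
an absolute constant `C`. -/
theorem dom_le_log_fracDom :
    ∃ C : ℝ, 0 < C ∧
      ∀ (V : Type) [Fintype V] [DecidableEq V] (G : SimpleGraph V),
        ∀ (_ : DecidableRel G.Adj), 2 ≤ G.maxDegree →
          (domNumber G : ℝ) ≤ (1 + Real.log (1 + (G.maxDegree : ℝ))) * fracDomNumber G ∧
          (domNumber G : ℝ) ≤ C * Real.log (Fintype.card V : ℝ) * fracDomNumber G := by
  refine ⟨2, by norm_num, ?_⟩
  intro V _ _ G _ hΔ
  have hne : Nonempty V := by
    by_contra h
    have : G.maxDegree ≤ 0 :=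
      G.maxDegree_le_of_forall_degree_le 0 (fun v => absurd ⟨v⟩ h)
    omega
  set Δ := G.maxDegree with hΔdef
  have hH1 : (1:ℝ) ≤ Harm (Δ + 1) := by
    rw [← Harm_one]; exact Harm_mono (by omega)
  have hHpos : (0:ℝ) < Harm (Δ + 1) := lt_of_lt_of_le one_pos hH1
  -- γ ≤ H(Δ+1) * γ_f
  have hmain : (domNumber G : ℝ) ≤ Harm (Δ + 1) * fracDomNumber G := by
    have hlb : (domNumber G : ℝ) / Harm (Δ + 1) ≤ fracDomNumber G := by
      apply le_csInf (fracSet_nonempty G)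
      rintro x ⟨f, hf, rfl⟩
      rw [div_le_iff₀ hHpos, mul_comm]
      exact domNumber_le_harm G f hf
    calc (domNumber G : ℝ) = Harm (Δ + 1) * ((domNumber G : ℝ) / Harm (Δ + 1)) := by
          field_simp
      _ ≤ Harm (Δ + 1) * fracDomNumber G :=
          mul_le_mul_of_nonneg_left hlb (le_of_lt hHpos)
  have hγf : 0 ≤ fracDomNumber G := fracDomNumber_nonneg G
  have hHlog : Harm (Δ + 1) ≤ 1 + Real.log (1 + (Δ : ℝ)) := by
    have := Harm_le_log (m := Δ + 1) (by omega)
    have hc : ((Δ + 1 : ℕ) : ℝ) = 1 + (Δ : ℝ) := by push_cast; ring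
    rwa [hc] at this
  have first : (domNumber G : ℝ) ≤ (1 + Real.log (1 + (Δ : ℝ))) * fracDomNumber G :=
    hmain.trans (mul_le_mul_of_nonneg_right hHlog hγf)
  refine ⟨first, ?_⟩
  -- second bound
  have hcard : Δ + 1 ≤ Fintype.card V := G.maxDegree_lt_card_verts
  have hn3 : (3 : ℝ) ≤ (Fintype.card V : ℝ) := by
    have : 3 ≤ Fintype.card V := by omega
    exact_mod_cast this
  have hlog1 : (1:ℝ) ≤ Real.log (Fintype.card V : ℝ) := by
    rw [Real.le_log_iff_exp_le (by linarith)]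
    calc Real.exp 1 ≤ 2.7182818286 := Real.exp_one_lt_d9.le
      _ ≤ 3 := by norm_num
      _ ≤ _ := hn3
  have hlog2 : Real.log (1 + (Δ : ℝ)) ≤ Real.log (Fintype.card V : ℝ) := by
    apply Real.log_le_log (by positivity)
    have : ((Δ : ℝ) + 1) ≤ (Fintype.card V : ℝ) := by exact_mod_cast hcard
    linarith
  have hfac : 1 + Real.log (1 + (Δ : ℝ)) ≤ 2 * Real.log (Fintype.card V : ℝ) := by
    linarith
  exact first.trans (mul_le_mul_of_nonneg_right hfac hγf)

end SG
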